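/- With M(μ) as defined via minimal-inversion coset representatives and the q-weighted symmetrization M(μ) = ∑_{σ ∈ D^μ} q^{-inv(σ)} σ(v(μ)), for weakly increasing ī, j̄ ∈ 𝓦_m with equal multiset-transition structure, the operator ẽ_{j̄ī} = ∑_{τ ∈ D_{j̄}} q^{-d_ī(τ)} e_{τ(j̄)τ(ī)} satisfies ẽ_{j̄ī} M(ī) = M(j̄), where e_{ab} = e_{a_1b_1} ⊗ ⋯ ⊗ e_{a_mb_m} are elementary matrix tensors and d_ī(τ) = inv(ξ) for the unique factorization τ = σξ with σ ∈ D_ī, ξ ∈ H_ī. -/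

import Mathlib

/-- number of inversions of a permutation of Fin m -/
def invNum {m : ℕ} (σ : Equiv.Perm (Fin m)) : ℕ :=
  (Finset.univ.filter (fun p : Fin m × Fin m => p.1 < p.2 ∧ σ p.2 < σ p.1)).card

/-- D_ī ⊂ S_m: minimal-inversion left coset representatives of the stabilizer H_ī -/
def Dset {N m : ℕ} (i : Fin m → Fin (N + 1)) : Finset (Equiv.Perm (Fin m)) :=
  Finset.univ.filter fun σ =>
    ∀ ρ : Equiv.Perm (Fin m),
      (∃ ξ : Equiv.Perm (Fin m), (∀ l, i (ξ l) = i l) ∧ ρ = σ * ξ) →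
      invNum σ ≤ invNum ρ

/-- basis tensor I_{i_1} ⊗ ⋯ ⊗ I_{i_m}, as a delta function on basis indices -/
noncomputable def deltaT {N m : ℕ} (i : Fin m → Fin (N + 1)) :
    (Fin m → Fin (N + 1)) → ℂ :=
  fun x => if x = i then 1 else 0

/-- M(ī) = ∑_{σ ∈ D_ī} q^{-inv(σ)} σ(v(ī)) -/
noncomputable def Mvec {N m : ℕ} (q : ℂ) (i : Fin m → Fin (N + 1)) :
    (Fin m → Fin (N + 1)) → ℂ :=
  ∑ σ ∈ Dset i, (q⁻¹) ^ (invNum σ) • deltaT (i ∘ ⇑σ⁻¹)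

/-- the matrix-unit tensor e_{a_1 b_1} ⊗ ⋯ ⊗ e_{a_m b_m}, sending the basis tensor
indexed by b to the one indexed by a and killing the other basis tensors -/
noncomputable def eMat {N m : ℕ} (a b : Fin m → Fin (N + 1)) :
    ((Fin m → Fin (N + 1)) → ℂ) → ((Fin m → Fin (N + 1)) → ℂ) :=
  fun f y => if y = a then f b else 0

theorem Equiv.Perm.apply_inv_self {α : Type*} (f : Equiv.Perm α) (x : α) : f (f⁻¹ x) = x :=
  f.apply_symm_apply x

theorem Equiv.Perm.inv_apply_self {α : Type*} (f : Equiv.Perm α) (x : α) : f⁻¹ (f x) = x :=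
  f.symm_apply_apply x

section Aux

variable {N m : ℕ}

/-- `σ` is strictly increasing on each fiber of `i`. -/
def IncOn (i : Fin m → Fin (N + 1)) (σ : Equiv.Perm (Fin m)) : Prop :=
  ∀ a b : Fin m, a < b → i a = i b → σ a < σ b

/-- same-fiber inversions -/
def invS (i : Fin m → Fin (N + 1)) (τ : Equiv.Perm (Fin m)) : ℕ :=
  (Finset.univ.filter
    (fun p : Fin m × Fin m => (p.1 < p.2 ∧ τ p.2 < τ p.1) ∧ i p.1 = i p.2)).card

/-- cross-fiber inversions -/
def invC (i : Fin m → Fin (N + 1)) (τ : Equiv.Perm (Fin m)) : ℕ :=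
  (Finset.univ.filter
    (fun p : Fin m × Fin m => (p.1 < p.2 ∧ τ p.2 < τ p.1) ∧ ¬ i p.1 = i p.2)).card

lemma invNum_split (i : Fin m → Fin (N + 1)) (τ : Equiv.Perm (Fin m)) :
    invNum τ = invS i τ + invC i τ := by
  classical
  have h := Finset.card_filter_add_card_filter_not
    (s := Finset.univ.filter (fun p : Fin m × Fin m => p.1 < p.2 ∧ τ p.2 < τ p.1))
    (p := fun p : Fin m × Fin m => i p.1 = i p.2)
  rw [Finset.filter_filter, Finset.filter_filter] at h
  rw [invNum, invS, invC, ← h]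

lemma stab_lt {i : Fin m → Fin (N + 1)} (hi : Monotone i) {ξ : Equiv.Perm (Fin m)}
    (hξ : ∀ l, i (ξ l) = i l) {a b : Fin m} (hab : a < b) (hne : i a ≠ i b) :
    ξ a < ξ b := by
  have h1 : i a < i b := lt_of_le_of_ne (hi hab.le) hne
  by_contra h
  have h2 : i (ξ b) ≤ i (ξ a) := hi (not_lt.1 h)
  rw [hξ, hξ] at h2
  exact absurd h1 (not_lt.2 h2)

lemma stab_inv {i : Fin m → Fin (N + 1)} {ξ : Equiv.Perm (Fin m)}
    (hξ : ∀ l, i (ξ l) = i l) : ∀ l, i (ξ⁻¹ l) = i l := by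
  intro l
  have := hξ (ξ⁻¹ l)
  rw [Equiv.Perm.apply_inv_self] at this
  exact this.symm

lemma invC_mul {i : Fin m → Fin (N + 1)} (hi : Monotone i) (τ : Equiv.Perm (Fin m))
    {ξ : Equiv.Perm (Fin m)} (hξ : ∀ l, i (ξ l) = i l) :
    invC i (τ * ξ) = invC i τ := by
  rw [invC, invC]
  apply Finset.card_bij (fun p _ => (ξ p.1, ξ p.2))
  · intro p hp
    simp only [Finset.mem_filter] at hp ⊢
    simp only [Finset.mem_filter, Finset.mem_univ, true_and, Equiv.Perm.mul_apply] at hp ⊢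
    obtain ⟨⟨h1, h2⟩, h3⟩ := hp
    exact ⟨⟨stab_lt hi hξ h1 h3, h2⟩, by rw [hξ, hξ]; exact h3⟩
  · intro p hp p' hp' h
    simp only [Prod.mk.injEq] at h
    exact Prod.ext (ξ.injective h.1) (ξ.injective h.2)
  · intro p hp
    simp only [Finset.mem_filter, Finset.mem_univ, true_and] at hp
    obtain ⟨⟨h1, h2⟩, h3⟩ := hp
    refine ⟨(ξ⁻¹ p.1, ξ⁻¹ p.2), ?_, ?_⟩
    · simp only [Finset.mem_filter]
      simp only [Finset.mem_filter, Finset.mem_univ, true_and, Equiv.Perm.mul_apply,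
        Equiv.Perm.apply_inv_self]
      exact ⟨⟨stab_lt hi (stab_inv hξ) h1 h3, h2⟩,
        by rw [stab_inv hξ, stab_inv hξ]; exact h3⟩
    · simp [Equiv.Perm.apply_inv_self]

lemma invC_stab_zero {i : Fin m → Fin (N + 1)} (hi : Monotone i)
    {ξ : Equiv.Perm (Fin m)} (hξ : ∀ l, i (ξ l) = i l) : invC i ξ = 0 := by
  rw [invC, Finset.card_eq_zero, Finset.filter_eq_empty_iff]
  rintro p - ⟨⟨h1, h2⟩, h3⟩
  exact absurd (stab_lt hi hξ h1 h3) (not_lt.2 h2.le)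

lemma invS_incOn_zero {i : Fin m → Fin (N + 1)} {σ : Equiv.Perm (Fin m)}
    (hσ : IncOn i σ) : invS i σ = 0 := by
  rw [invS, Finset.card_eq_zero, Finset.filter_eq_empty_iff]
  rintro p - ⟨⟨h1, h2⟩, h3⟩
  exact absurd (hσ _ _ h1 h3) (not_lt.2 h2.le)

lemma invS_mul {i : Fin m → Fin (N + 1)} {σ : Equiv.Perm (Fin m)}
    (hσ : IncOn i σ) {ξ : Equiv.Perm (Fin m)} (hξ : ∀ l, i (ξ l) = i l) :
    invS i (σ * ξ) = invS i ξ := by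
  rw [invS, invS]
  congr 1
  apply Finset.filter_congr
  intro p _
  simp only [Equiv.Perm.mul_apply]
  constructor
  · rintro ⟨⟨h1, h2⟩, h3⟩
    refine ⟨⟨h1, ?_⟩, h3⟩
    rcases lt_trichotomy (ξ p.2) (ξ p.1) with h | h | h
    · exact h
    · exact absurd (ξ.injective h) (ne_of_gt h1)
    · have : i (ξ p.1) = i (ξ p.2) := by rw [hξ, hξ]; exact h3
      exact absurd (hσ _ _ h this) (not_lt.2 h2.le)
  · rintro ⟨⟨h1, h2⟩, h3⟩
    refine ⟨⟨h1, ?_⟩, h3⟩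
    have : i (ξ p.2) = i (ξ p.1) := by rw [hξ, hξ]; exact h3.symm
    exact hσ _ _ h2 this

lemma invNum_mul {i : Fin m → Fin (N + 1)} (hi : Monotone i) {σ : Equiv.Perm (Fin m)}
    (hσ : IncOn i σ) {ξ : Equiv.Perm (Fin m)} (hξ : ∀ l, i (ξ l) = i l) :
    invNum (σ * ξ) = invNum σ + invNum ξ := by
  have h1 := invNum_split i (σ * ξ)
  have h2 := invNum_split i σ
  have h3 := invNum_split i ξ
  rw [invS_mul hσ hξ, invC_mul hi σ hξ] at h1
  rw [invS_incOn_zero hσ] at h2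
  rw [invC_stab_zero hi hξ] at h3
  omega

lemma eq_one_of_invNum_zero {ξ : Equiv.Perm (Fin m)} (h : invNum ξ = 0) : ξ = 1 := by
  have hmono : StrictMono ξ := by
    intro a b hab
    rcases lt_trichotomy (ξ a) (ξ b) with h' | h' | h'
    · exact h'
    · exact absurd (ξ.injective h') (ne_of_lt hab)
    · exfalso
      rw [invNum, Finset.card_eq_zero, Finset.filter_eq_empty_iff] at h
      exact h (Finset.mem_univ (a, b)) ⟨hab, h'⟩
  have hξ : ∀ x, ξ x = x := by
    intro x
    have := Fin.coe_orderIso_apply (hmono.orderIsoOfSurjective _ ξ.surjective) x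
    exact Fin.ext this
  exact Equiv.ext hξ

lemma exists_rep {i : Fin m → Fin (N + 1)} (hi : Monotone i) (τ : Equiv.Perm (Fin m)) :
    ∃ ρ : Equiv.Perm (Fin m), IncOn i ρ ∧ i ∘ ⇑ρ⁻¹ = i ∘ ⇑τ⁻¹ := by
  set f : Fin m → Fin (N + 1) := i ∘ ⇑τ⁻¹ with hf
  set ρ : Equiv.Perm (Fin m) := Tuple.sort f with hρ
  have hfτ : f ∘ ⇑τ = i := by
    funext l
    simp [hf, Equiv.Perm.inv_apply_self]
  have hcomp : f ∘ ⇑ρ = i := by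
    have h1 : Monotone (f ∘ ⇑ρ) := Tuple.monotone_sort f
    have h2 : Monotone (f ∘ ⇑τ) := by rw [hfτ]; exact hi
    rw [Tuple.unique_monotone h1 h2, hfτ]
  have hsort := (Tuple.eq_sort_iff.mp hρ).2
  refine ⟨ρ, ?_, ?_⟩
  · intro a b hab heq
    apply hsort a b hab
    have ha : f (ρ a) = i a := congrFun hcomp a
    have hb : f (ρ b) = i b := congrFun hcomp b
    rw [ha, hb]; exact heq
  · funext x
    have := congrFun hcomp (ρ⁻¹ x)
    simp only [Function.comp_apply, Equiv.Perm.apply_inv_self] at this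
    simp only [Function.comp_apply]
    exact this.symm

lemma mem_Dset_iff {i : Fin m → Fin (N + 1)} (hi : Monotone i)
    {σ : Equiv.Perm (Fin m)} : σ ∈ Dset i ↔ IncOn i σ := by
  constructor
  · intro hmem
    by_contra hnot
    simp only [IncOn, not_forall] at hnot
    obtain ⟨a, b, hab, heq, hlt⟩ := hnot
    have hba : σ b < σ a := by
      rcases lt_trichotomy (σ a) (σ b) with h | h | h
      · exact absurd h hlt
      · exact absurd (σ.injective h) (ne_of_lt hab)
      · exact h
    have hSpos : 0 < invS i σ := by
      rw [invS, Finset.card_pos]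
      exact ⟨(a, b), Finset.mem_filter.2 ⟨Finset.mem_univ _, ⟨hab, hba⟩, heq⟩⟩
    obtain ⟨ρ, hρinc, hρeq⟩ := exists_rep hi σ
    have hξ : ∀ l, i ((σ⁻¹ * ρ) l) = i l := by
      intro l
      have := congrFun hρeq (ρ l)
      simp only [Function.comp_apply, Equiv.Perm.inv_apply_self] at this
      simpa [Equiv.Perm.mul_apply] using this.symm ▸ rfl
    have hfac : ρ = σ * (σ⁻¹ * ρ) := by group
    have hmin : invNum σ ≤ invNum ρ := by
      rw [Dset, Finset.mem_filter] at hmem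
      exact hmem.2 ρ ⟨σ⁻¹ * ρ, hξ, hfac⟩
    have hρval : invNum ρ = invC i σ := by
      have h1 := invNum_split i ρ
      rw [invS_incOn_zero hρinc] at h1
      have h2 : invC i ρ = invC i σ := by
        rw [hfac]; exact invC_mul hi σ hξ
      omega
    have h3 := invNum_split i σ
    omega
  · intro hinc
    rw [Dset, Finset.mem_filter]
    refine ⟨Finset.mem_univ _, ?_⟩
    rintro ρ ⟨ξ, hξ, rfl⟩
    rw [invNum_mul hi hinc hξ]
    exact Nat.le_add_right _ _

lemma Dset_unique {i : Fin m → Fin (N + 1)} (hi : Monotone i)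
    {σ σ' : Equiv.Perm (Fin m)} (h1 : σ ∈ Dset i) (h2 : σ' ∈ Dset i)
    (h : i ∘ ⇑σ⁻¹ = i ∘ ⇑σ'⁻¹) : σ = σ' := by
  have hξ : ∀ l, i ((σ⁻¹ * σ') l) = i l := by
    intro l
    have := congrFun h (σ' l)
    simp only [Function.comp_apply, Equiv.Perm.inv_apply_self] at this
    simpa [Equiv.Perm.mul_apply] using this
  have hfac : σ' = σ * (σ⁻¹ * σ') := by group
  have hfac' : σ = σ' * (σ⁻¹ * σ')⁻¹ := by group
  rw [Dset, Finset.mem_filter] at h1 h2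
  have ha : invNum σ ≤ invNum σ' := h1.2 σ' ⟨σ⁻¹ * σ', hξ, hfac⟩
  have hb : invNum σ' ≤ invNum σ := h2.2 σ ⟨(σ⁻¹ * σ')⁻¹, stab_inv hξ, hfac'⟩
  have hinc : IncOn i σ := (mem_Dset_iff hi).1 (by rw [Dset, Finset.mem_filter]; exact h1)
  have hmul : invNum σ' = invNum σ + invNum (σ⁻¹ * σ') := by
    conv_lhs => rw [hfac]
    exact invNum_mul hi hinc hξ
  have hz : invNum (σ⁻¹ * σ') = 0 := by omega
  have := eq_one_of_invNum_zero hz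
  rw [hfac, this, mul_one]

end Aux

/-- ẽ_{j̄ī} = ∑_{τ ∈ D_{j̄}} q^{-d_ī(τ)} e_{τ(j̄) τ(ī)} satisfies
ẽ_{j̄ī} M(ī) = M(j̄), where d_ī(τ) = inv(ξ) for the unique factorization τ = σξ
with σ ∈ D_ī and ξ ∈ H_ī. -/
theorem stmt_16 (N m : ℕ) (q : ℂ) (hq : q ≠ 0)
    (i j : Fin m → Fin (N + 1)) (hi : Monotone i) (hj : Monotone j)
    (d : Equiv.Perm (Fin m) → ℕ)
    (hd : ∀ τ σ ξ : Equiv.Perm (Fin m), σ ∈ Dset i → (∀ l, i (ξ l) = i l) →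
      τ = σ * ξ → d τ = invNum ξ) :
    (∑ τ ∈ Dset j, (q⁻¹) ^ (d τ) • eMat (j ∘ ⇑τ⁻¹) (i ∘ ⇑τ⁻¹) (Mvec q i))
      = Mvec q j := by
  conv_rhs => rw [Mvec]
  apply Finset.sum_congr rfl
  intro τ _
  obtain ⟨ρ, hρinc, hρeq⟩ := exists_rep hi τ
  have hρmem : ρ ∈ Dset i := (mem_Dset_iff hi).2 hρinc
  have hξ : ∀ l, i ((ρ⁻¹ * τ) l) = i l := by
    intro l
    have := congrFun hρeq (τ l)
    simp only [Function.comp_apply, Equiv.Perm.inv_apply_self] at this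
    simpa [Equiv.Perm.mul_apply] using this
  have hτfac : τ = ρ * (ρ⁻¹ * τ) := by group
  have hdτ : d τ = invNum (ρ⁻¹ * τ) := hd τ ρ (ρ⁻¹ * τ) hρmem hξ hτfac
  have hinv : invNum τ = invNum ρ + invNum (ρ⁻¹ * τ) := by
    conv_lhs => rw [hτfac]
    exact invNum_mul hi hρinc hξ
  have hval : Mvec q i (i ∘ ⇑τ⁻¹) = (q⁻¹) ^ invNum ρ := by
    rw [Mvec, Finset.sum_apply]
    rw [Finset.sum_eq_single ρ]
    · simp [deltaT, hρeq.symm, -Equiv.Perm.coe_inv]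
    · intro σ hσ hne
      have hne' : ¬ (i ∘ ⇑τ⁻¹ = i ∘ ⇑σ⁻¹) := by
        intro h
        exact hne (Dset_unique hi hσ hρmem (h.symm.trans hρeq.symm))
      simp [deltaT, hne', -Equiv.Perm.coe_inv]
    · intro h
      exact absurd hρmem h
  funext y
  simp only [Pi.smul_apply, eMat, deltaT, smul_eq_mul]
  by_cases hy : y = j ∘ ⇑τ⁻¹
  · rw [if_pos hy, if_pos hy, hval, hdτ, hinv, pow_add, mul_one, mul_comm]
  · rw [if_neg hy, if_neg hy, mul_zero, mul_zero]
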